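/- For any ξ ∈ F_q((T^{-1})) and any positive integer n, λ_n(ξ) = λ_n(ξ^p), where p is the characteristic. -/

import Mathlib

open Polynomial
open scoped Classical

namespace MahlerKoksmaFq

noncomputable section

variable (Fq : Type) [Field Fq] [Fintype Fq]

/-- `K Fq` models `F_q((T⁻¹))`: Laurent series in the variable `t = T⁻¹`. -/
abbrev K := LaurentSeries Fq

/-- The element `T` (the inverse of the Laurent-series variable `t = T⁻¹`). -/
def Tvar : K Fq := HahnSeries.single (-1 : ℤ) 1

/-- The absolute value `|ξ| = q^{-ν(ξ)}` on `F_q((T⁻¹))`. -/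
def absK (ξ : K Fq) : ℝ :=
  if ξ = 0 then 0 else (Fintype.card Fq : ℝ) ^ (-(HahnSeries.order ξ))

/-- The embedding of `F_q[T]` into `F_q((T⁻¹))`, sending `T` to `Tvar`. -/
def emb : Polynomial Fq →+* K Fq :=
  Polynomial.eval₂RingHom (algebraMap Fq (K Fq)) (Tvar Fq)

/-- Evaluation of `P ∈ F_q[T][X]` at `ξ ∈ F_q((T⁻¹))`. -/
def evalK (P : Polynomial (Polynomial Fq)) (ξ : K Fq) : K Fq :=
  P.eval₂ (emb Fq) ξ

/-- Height of a polynomial over `F_q[T]`: the maximum of the absolute values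
`q^{deg c}` of its coefficients. -/
def HP (P : Polynomial (Polynomial Fq)) : ℝ :=
  (Fintype.card Fq : ℝ) ^ (P.support.sup fun i => (P.coeff i).natDegree)

/-- `ξ` is algebraic (over `F_q[T]`) of degree at most `n`. -/
def IsAlgDegLe (ξ : K Fq) (n : ℕ) : Prop :=
  ∃ P : Polynomial (Polynomial Fq), P ≠ 0 ∧ P.natDegree ≤ n ∧ evalK Fq P ξ = 0

/-- `ξ` is algebraic over `F_q[T]`. -/
def IsAlgK (ξ : K Fq) : Prop :=
  ∃ P : Polynomial (Polynomial Fq), P ≠ 0 ∧ evalK Fq P ξ = 0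

/-- The degree of an algebraic element of `F_q((T⁻¹))`. -/
def degA (α : K Fq) : ℕ :=
  sInf {d | ∃ P : Polynomial (Polynomial Fq), P ≠ 0 ∧ P.natDegree = d ∧ evalK Fq P α = 0}

/-- The height of an algebraic element `α` of `F_q((T⁻¹))`: the least height of a
 nonzero annihilating polynomial of minimal degree (= height of the minimal
 defining polynomial over `F_q[T]`). -/
def HA (α : K Fq) : ℝ :=
  sInf {h | ∃ P : Polynomial (Polynomial Fq),
    P ≠ 0 ∧ P.natDegree = degA Fq α ∧ evalK Fq P α = 0 ∧ h = HP Fq P}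

/-- The defining set for Mahler's exponent `w_n`. -/
def wnSet (ξ : K Fq) (n : ℕ) : Set ℝ :=
  {w | {P : Polynomial (Polynomial Fq) |
      P.natDegree ≤ n ∧ 0 < absK Fq (evalK Fq P ξ) ∧
      absK Fq (evalK Fq P ξ) < HP Fq P ^ (-w)}.Infinite}

/-- Mahler's exponent `w_n(ξ)`. -/
def wn (ξ : K Fq) (n : ℕ) : EReal :=
  sSup ((fun w : ℝ => (w : EReal)) '' wnSet Fq ξ n)

/-- The defining set for `w_n^{sep}` (separable polynomials only). -/
def wnsepSet (ξ : K Fq) (n : ℕ) : Set ℝ :=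
  {w | {P : Polynomial (Polynomial Fq) |
      P.Separable ∧ P.natDegree ≤ n ∧ 0 < absK Fq (evalK Fq P ξ) ∧
      absK Fq (evalK Fq P ξ) < HP Fq P ^ (-w)}.Infinite}

/-- The exponent `w_n^{sep}(ξ)`. -/
def wnsep (ξ : K Fq) (n : ℕ) : EReal :=
  sSup ((fun w : ℝ => (w : EReal)) '' wnsepSet Fq ξ n)

/-- The defining set for Koksma's exponent `w_n^*` (approximation by algebraic
elements lying in `F_q((T⁻¹))`). -/
def wnstarSet (ξ : K Fq) (n : ℕ) : Set ℝ :=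
  {w | {α : K Fq | IsAlgK Fq α ∧ degA Fq α ≤ n ∧ 0 < absK Fq (ξ - α) ∧
      absK Fq (ξ - α) < HA Fq α ^ (-w - 1)}.Infinite}

/-- Koksma's exponent `w_n^*(ξ)`. -/
def wnstar (ξ : K Fq) (n : ℕ) : EReal :=
  sSup ((fun w : ℝ => (w : EReal)) '' wnstarSet Fq ξ n)

/-- The defining set for the uniform exponent `ŵ_n`. -/
def hwnSet (ξ : K Fq) (n : ℕ) : Set ℝ :=
  {w | ∃ H0 : ℝ, ∀ H : ℝ, H0 < H → ∃ P : Polynomial (Polynomial Fq),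
      P.natDegree ≤ n ∧ HP Fq P ≤ H ∧ 0 < absK Fq (evalK Fq P ξ) ∧
      absK Fq (evalK Fq P ξ) < H ^ (-w)}

/-- The uniform exponent `ŵ_n(ξ)`. -/
def hwn (ξ : K Fq) (n : ℕ) : EReal :=
  sSup ((fun w : ℝ => (w : EReal)) '' hwnSet Fq ξ n)

/-- The defining set for the uniform exponent `ŵ_n^{sep}` (separable polynomials only). -/
def hwnsepSet (ξ : K Fq) (n : ℕ) : Set ℝ :=
  {w | ∃ H0 : ℝ, ∀ H : ℝ, H0 < H → ∃ P : Polynomial (Polynomial Fq),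
      P.Separable ∧ P.natDegree ≤ n ∧ HP Fq P ≤ H ∧ 0 < absK Fq (evalK Fq P ξ) ∧
      absK Fq (evalK Fq P ξ) < H ^ (-w)}

/-- The uniform exponent `ŵ_n^{sep}(ξ)`. -/
def hwnsep (ξ : K Fq) (n : ℕ) : EReal :=
  sSup ((fun w : ℝ => (w : EReal)) '' hwnsepSet Fq ξ n)

/-- The fractional part of a Laurent series in `T⁻¹`: the part with only
 negative powers of `T` (positive powers of the series variable `t = T⁻¹`). -/
def fracPart (η : K Fq) : K Fq :=
  { coeff := fun m => if 0 < m then η.coeff m else 0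
    isPWO_support' := η.isPWO_support'.mono (fun m hm => by
      by_cases h : 0 < m
      · simpa [Function.mem_support, h] using hm
      · simp [Function.mem_support, h] at hm) }

/-- The fractional-part norm `‖η‖ = |η - [η]|`. -/
def fracNorm (η : K Fq) : ℝ := absK Fq (fracPart Fq η)

/-- `max{‖R(T)ξ‖, …, ‖R(T)ξⁿ‖}`. -/
def maxFrac (ξ : K Fq) (n : ℕ) (R : Polynomial Fq) : ℝ :=
  sSup ((fun i => fracNorm Fq (emb Fq R * ξ ^ i)) '' Set.Icc 1 n)

/-- The defining set for the exponent of simultaneous approximation `λ_n`. -/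
def lamSet (ξ : K Fq) (n : ℕ) : Set ℝ :=
  {l | {R : Polynomial Fq | 0 < maxFrac Fq ξ n R ∧
      maxFrac Fq ξ n R < (Fintype.card Fq : ℝ) ^ (-(l * R.natDegree))}.Infinite}

/-- The exponent of simultaneous approximation `λ_n(ξ)`. -/
def lam (ξ : K Fq) (n : ℕ) : EReal :=
  sSup ((fun w : ℝ => (w : EReal)) '' lamSet Fq ξ n)

/-- The defining set for the uniform exponent `λ̂_n`. -/
def hlamSet (ξ : K Fq) (n : ℕ) : Set ℝ :=
  {l | ∃ d0 : ℕ, ∀ d : ℕ, d0 < d → ∃ R : Polynomial Fq, R.natDegree ≤ d ∧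
      0 < maxFrac Fq ξ n R ∧
      maxFrac Fq ξ n R < (Fintype.card Fq : ℝ) ^ (-(l * d))}

/-- The uniform exponent `λ̂_n(ξ)`. -/
def hlam (ξ : K Fq) (n : ℕ) : EReal :=
  sSup ((fun w : ℝ => (w : EReal)) '' hlamSet Fq ξ n)

/-- An algebraic closure of `F_q((T⁻¹))`; its algebraic elements are exactly the
algebraic elements of the completion `C_∞`. -/
abbrev Kbar := AlgebraicClosure (K Fq)

/-- The embedding of `F_q[T]` into the algebraic closure. -/
def embbar : Polynomial Fq →+* Kbar Fq :=
  (algebraMap (K Fq) (Kbar Fq)).comp (emb Fq)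

/-- Evaluation of `P ∈ F_q[T][X]` at a point of the algebraic closure. -/
def evalKbar (P : Polynomial (Polynomial Fq)) (x : Kbar Fq) : Kbar Fq :=
  P.eval₂ (embbar Fq) x

/-- The unique extension of the absolute value of `F_q((T⁻¹))` to its algebraic
closure: `|x| = |N(x)|^{1/d} = |a_0|^{1/d}` where `a_0` is the constant term and
`d` the degree of the minimal polynomial of `x` over `F_q((T⁻¹))`. -/
def absC (x : Kbar Fq) : ℝ :=
  absK Fq ((minpoly (K Fq) x).coeff 0) ^ ((1 : ℝ) / (minpoly (K Fq) x).natDegree)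

/-- `x ∈ C_∞` is algebraic over `F_q[T]`. -/
def IsAlgKbar (x : Kbar Fq) : Prop :=
  ∃ P : Polynomial (Polynomial Fq), P ≠ 0 ∧ evalKbar Fq P x = 0

/-- Degree over `F_q[T]` of an algebraic element of `C_∞`. -/
def degAbar (x : Kbar Fq) : ℕ :=
  sInf {d | ∃ P : Polynomial (Polynomial Fq), P ≠ 0 ∧ P.natDegree = d ∧ evalKbar Fq P x = 0}

/-- Height of an algebraic element of `C_∞`. -/
def HAbar (x : Kbar Fq) : ℝ :=
  sInf {h | ∃ P : Polynomial (Polynomial Fq),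
    P ≠ 0 ∧ P.natDegree = degAbar Fq x ∧ evalKbar Fq P x = 0 ∧ h = HP Fq P}

/-- The defining set for the exponent `w_n^@` (approximation by algebraic
elements of `C_∞`). -/
def wnAtSet (ξ : K Fq) (n : ℕ) : Set ℝ :=
  {w | {α : Kbar Fq | IsAlgKbar Fq α ∧ degAbar Fq α ≤ n ∧
      0 < absC Fq (algebraMap (K Fq) (Kbar Fq) ξ - α) ∧
      absC Fq (algebraMap (K Fq) (Kbar Fq) ξ - α) < HAbar Fq α ^ (-w - 1)}.Infinite}

/-- The exponent `w_n^@(ξ)`. -/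
def wnAt (ξ : K Fq) (n : ℕ) : EReal :=
  sSup ((fun w : ℝ => (w : EReal)) '' wnAtSet Fq ξ n)

/-- The defining set for the uniform exponent `ŵ_n^@`. -/
def hwnAtSet (ξ : K Fq) (n : ℕ) : Set ℝ :=
  {w | ∃ H0 : ℝ, ∀ H : ℝ, H0 < H → ∃ α : Kbar Fq, IsAlgKbar Fq α ∧ degAbar Fq α ≤ n ∧
      HAbar Fq α ≤ H ∧ 0 < absC Fq (algebraMap (K Fq) (Kbar Fq) ξ - α) ∧
      absC Fq (algebraMap (K Fq) (Kbar Fq) ξ - α) < (HAbar Fq α)⁻¹ * H ^ (-w)}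

/-- The uniform exponent `ŵ_n^@(ξ)`. -/
def hwnAt (ξ : K Fq) (n : ℕ) : EReal :=
  sSup ((fun w : ℝ => (w : EReal)) '' hwnAtSet Fq ξ n)

/-- `w(ξ) = limsup_n w_n(ξ)/n`. -/
def wlim (ξ : K Fq) : EReal :=
  Filter.atTop.limsup fun n : ℕ => wn Fq ξ n * (((n : ℝ)⁻¹ : ℝ) : EReal)

/-- `w^*(ξ) = limsup_n w_n^*(ξ)/n`. -/
def wlimstar (ξ : K Fq) : EReal :=
  Filter.atTop.limsup fun n : ℕ => wnstar Fq ξ n * (((n : ℝ)⁻¹ : ℝ) : EReal)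

/-- Height of a polynomial over `C_∞`: maximum of the absolute values of its
coefficients. -/
def HC (P : Polynomial (Kbar Fq)) : ℝ :=
  sSup ((fun i => absC Fq (P.coeff i)) '' Set.Iic P.natDegree)



/-! ### Auxiliary development for Statement 8 -/

set_option linter.unusedSectionVars false

section Aux

lemma one_lt_q : (1:ℝ) < (Fintype.card Fq : ℝ) := by exact_mod_cast Fintype.one_lt_card

lemma q_pos : (0:ℝ) < (Fintype.card Fq : ℝ) := lt_trans one_pos (one_lt_q Fq)

lemma absK_zero : absK Fq 0 = 0 := if_pos rfl

lemma absK_of_ne {x : K Fq} (h : x ≠ 0) :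
    absK Fq x = (Fintype.card Fq : ℝ) ^ (-x.order) := if_neg h

lemma absK_nonneg (x : K Fq) : 0 ≤ absK Fq x := by
  unfold absK; split
  · exact le_refl 0
  · exact le_of_lt (zpow_pos (q_pos Fq) _)

lemma absK_pos {x : K Fq} (h : x ≠ 0) : 0 < absK Fq x := by
  rw [absK_of_ne Fq h]; exact zpow_pos (q_pos Fq) _

lemma absK_eq_zero_iff {x : K Fq} : absK Fq x = 0 ↔ x = 0 := by
  constructor
  · intro h; by_contra hx; exact absurd h (ne_of_gt (absK_pos Fq hx))
  · intro h; rw [h, absK_zero]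

lemma order_pow {x : K Fq} (h : x ≠ 0) (m : ℕ) : (x ^ m).order = (m : ℤ) * x.order := by
  induction m with
  | zero => simp [HahnSeries.order_one]
  | succ k ih =>
      rw [pow_succ, HahnSeries.order_mul (pow_ne_zero k h) h, ih]
      push_cast; ring

lemma absK_pow (x : K Fq) {m : ℕ} (hm : m ≠ 0) : absK Fq (x ^ m) = absK Fq x ^ m := by
  rcases eq_or_ne x 0 with rfl | hx
  · rw [zero_pow hm, absK_zero, zero_pow hm]
  · rw [absK_of_ne Fq (pow_ne_zero m hx), absK_of_ne Fq hx, order_pow Fq hx,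
      ← zpow_natCast ((Fintype.card Fq : ℝ) ^ (-x.order)) m, ← zpow_mul]
    congr 1; ring

/-- Support bounded below by `c`. -/
def SuppGE (c : ℤ) (x : K Fq) : Prop := ∀ m : ℤ, m < c → x.coeff m = 0

/-- Support bounded above by `0`. -/
def SuppLE (x : K Fq) : Prop := ∀ m : ℤ, 0 < m → x.coeff m = 0

lemma suppGE_mono {c c' : ℤ} (h : c' ≤ c) {x : K Fq} (hx : SuppGE Fq c x) :
    SuppGE Fq c' x := fun m hm => hx m (lt_of_lt_of_le hm h)

lemma suppGE_mul {c d : ℤ} {x y : K Fq} (hx : SuppGE Fq c x) (hy : SuppGE Fq d y) :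
    SuppGE Fq (c + d) (x * y) := by
  intro m hm
  by_contra h
  obtain ⟨i, hi, j, hj, rfl⟩ :=
    HahnSeries.support_mul_subset ((HahnSeries.mem_support _ _).2 h)
  have h1 : c ≤ i := by by_contra hc; exact hi (hx i (not_le.mp hc))
  have h2 : d ≤ j := by by_contra hc; exact hj (hy j (not_le.mp hc))
  exact absurd (show i + j < c + d from hm) (not_lt.mpr (add_le_add h1 h2))

lemma suppLE_mul {x y : K Fq} (hx : SuppLE Fq x) (hy : SuppLE Fq y) :
    SuppLE Fq (x * y) := by
  intro m hm
  by_contra h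
  obtain ⟨i, hi, j, hj, rfl⟩ :=
    HahnSeries.support_mul_subset ((HahnSeries.mem_support _ _).2 h)
  have h1 : i ≤ 0 := by by_contra hc; exact hi (hx i (not_le.mp hc))
  have h2 : j ≤ 0 := by by_contra hc; exact hj (hy j (not_le.mp hc))
  exact absurd (show 0 < i + j from hm) (not_lt.mpr (add_nonpos h1 h2))

lemma suppLE_one : SuppLE Fq 1 := by
  intro m hm
  rw [HahnSeries.coeff_one, if_neg]
  omega

lemma suppLE_single {a : ℤ} (ha : a ≤ 0) (r : Fq) :
    SuppLE Fq (HahnSeries.single a r) := by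
  intro m hm
  rw [HahnSeries.coeff_single, if_neg]
  omega

lemma suppLE_pow {x : K Fq} (hx : SuppLE Fq x) (m : ℕ) : SuppLE Fq (x ^ m) := by
  induction m with
  | zero => simpa using suppLE_one Fq
  | succ k ih => rw [pow_succ]; exact suppLE_mul Fq ih hx

lemma suppGE_pow {x : K Fq} (hx : SuppGE Fq 1 x) (m : ℕ) : SuppGE Fq (m : ℤ) (x ^ m) := by
  induction m with
  | zero =>
      intro j hj
      rw [pow_zero, HahnSeries.coeff_one, if_neg]
      omega
  | succ k ih =>
      rw [pow_succ]
      have := suppGE_mul Fq ih hx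
      push_cast
      convert this using 2
  
lemma suppLE_add {x y : K Fq} (hx : SuppLE Fq x) (hy : SuppLE Fq y) :
    SuppLE Fq (x + y) := by
  intro m hm; rw [HahnSeries.coeff_add, hx m hm, hy m hm, add_zero]

lemma suppLE_sub {x y : K Fq} (hx : SuppLE Fq x) (hy : SuppLE Fq y) :
    SuppLE Fq (x - y) := by
  intro m hm
  rw [HahnSeries.coeff_sub, hx m hm, hy m hm, sub_zero]

-- fracPart
lemma fracPart_coeff (η : K Fq) (m : ℤ) :
    (fracPart Fq η).coeff m = if 0 < m then η.coeff m else 0 := rfl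

lemma fracPart_add (a b : K Fq) :
    fracPart Fq (a + b) = fracPart Fq a + fracPart Fq b := by
  ext m
  rw [HahnSeries.coeff_add, fracPart_coeff, fracPart_coeff, fracPart_coeff, HahnSeries.coeff_add]
  split <;> simp

lemma fracPart_zero : fracPart Fq 0 = 0 := by
  ext m; rw [fracPart_coeff]; split <;> simp

lemma fracPart_sum {α : Type} (s : Finset α) (F : α → K Fq) :
    fracPart Fq (∑ j ∈ s, F j) = ∑ j ∈ s, fracPart Fq (F j) := by
  induction s using Finset.cons_induction with
  | empty => simpa using fracPart_zero Fq
  | cons a s ha ih => rw [Finset.sum_cons, Finset.sum_cons, fracPart_add, ih]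

lemma sum_coeff {α : Type} (s : Finset α) (F : α → K Fq) (m : ℤ) :
    (∑ j ∈ s, F j).coeff m = ∑ j ∈ s, (F j).coeff m := by
  induction s using Finset.cons_induction with
  | empty => simp
  | cons a s ha ih => rw [Finset.sum_cons, Finset.sum_cons, HahnSeries.coeff_add, ih]

lemma suppGE_one_fracPart (η : K Fq) : SuppGE Fq 1 (fracPart Fq η) := by
  intro m hm; rw [fracPart_coeff, if_neg]; omega

lemma fracPart_eq_self {η : K Fq} (h : SuppGE Fq 1 η) : fracPart Fq η = η := by
  ext m
  rw [fracPart_coeff]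
  split
  · rfl
  · rename_i hm
    exact (h m (by omega)).symm

lemma fracPart_eq_zero {η : K Fq} (h : SuppLE Fq η) : fracPart Fq η = 0 := by
  ext m
  rw [fracPart_coeff]
  split
  · rename_i hm
    simp [h m hm]
  · simp

lemma suppLE_sub_fracPart (η : K Fq) : SuppLE Fq (η - fracPart Fq η) := by
  intro m hm
  rw [HahnSeries.coeff_sub, fracPart_coeff, if_pos hm, sub_self]

lemma suppLE_of_fracPart_eq_zero {η : K Fq} (h : fracPart Fq η = 0) : SuppLE Fq η := by
  intro m hm
  have := congrArg (fun x : K Fq => x.coeff m) h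
  simpa [fracPart_coeff, hm] using this

-- fracNorm
lemma fracNorm_nonneg (η : K Fq) : 0 ≤ fracNorm Fq η := absK_nonneg Fq _

lemma fracNorm_eq_zero_iff {η : K Fq} : fracNorm Fq η = 0 ↔ fracPart Fq η = 0 :=
  absK_eq_zero_iff Fq

lemma order_fracPart_pos {η : K Fq} (h : fracPart Fq η ≠ 0) :
    1 ≤ (fracPart Fq η).order := by
  by_contra hc
  exact (HahnSeries.coeff_order_eq_zero.not.mpr h)
    (suppGE_one_fracPart Fq η _ (not_le.mp hc))

lemma fracNorm_lt_one (η : K Fq) : fracNorm Fq η < 1 := by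
  rcases eq_or_ne (fracPart Fq η) 0 with h | h
  · rw [fracNorm, h, absK_zero]; norm_num
  · rw [fracNorm, absK_of_ne Fq h]
    have h1 := order_fracPart_pos Fq h
    calc (Fintype.card Fq : ℝ) ^ (-(fracPart Fq η).order)
        ≤ (Fintype.card Fq : ℝ) ^ (-1 : ℤ) :=
          zpow_le_zpow_right₀ (le_of_lt (one_lt_q Fq)) (by omega)
      _ < 1 := by
          rw [zpow_neg, zpow_one]
          rw [inv_lt_one_iff₀]
          right; exact one_lt_q Fq

end Aux

section CharPAux

variable (p : ℕ) [Fact p.Prime] [CharP Fq p]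

lemma charP_K : CharP (K Fq) p :=
  charP_of_injective_ringHom (HahnSeries.C_injective (Γ := ℤ) (R := Fq)) p

lemma charP_poly : CharP (Polynomial Fq) p :=
  charP_of_injective_ringHom (Polynomial.C_injective (R := Fq)) p

lemma fracPart_pow_char (η : K Fq) :
    fracPart Fq (η ^ p) = (fracPart Fq η) ^ p := by
  haveI := charP_K Fq p
  have h1 : η ^ p = (η - fracPart Fq η) ^ p + (fracPart Fq η) ^ p := by
    rw [← add_pow_char]
    ring_nf
  rw [h1, fracPart_add, fracPart_eq_zero Fq (suppLE_pow Fq (suppLE_sub_fracPart Fq η) p),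
    zero_add, fracPart_eq_self Fq]
  exact suppGE_mono Fq (by exact_mod_cast Nat.one_le_iff_ne_zero.mpr (Fact.out (p := p.Prime)).ne_zero ) (suppGE_pow Fq (suppGE_one_fracPart Fq η) p)

lemma fracNorm_pow_char (η : K Fq) :
    fracNorm Fq (η ^ p) = fracNorm Fq η ^ p := by
  rw [fracNorm, fracPart_pow_char Fq p, absK_pow Fq _ (Fact.out (p := p.Prime)).ne_zero]
  rfl

end CharPAux



section EmbAux

lemma Tvar_pow (k : ℕ) : Tvar Fq ^ k = HahnSeries.single (-(k : ℤ)) 1 := by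
  induction k with
  | zero => simp [HahnSeries.single_zero_one]
  | succ j ih =>
      rw [pow_succ, ih, Tvar, HahnSeries.single_mul_single]
      norm_num
      congr 1
      push_cast
      ring

lemma algebraMap_K (a : Fq) : algebraMap Fq (K Fq) a = HahnSeries.single (0 : ℤ) a := by
  rw [HahnSeries.algebraMap_apply']
  simp [PowerSeries.algebraMap_apply, HahnSeries.ofPowerSeries_C, HahnSeries.C_apply]

lemma emb_eq_sum (g : Polynomial Fq) :
    emb Fq g = ∑ n ∈ g.support, HahnSeries.single (-(n : ℤ)) (g.coeff n) := by
  rw [emb, coe_eval₂RingHom, Polynomial.eval₂_eq_sum, Polynomial.sum]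
  refine Finset.sum_congr rfl fun n _ => ?_
  rw [Tvar_pow Fq n, algebraMap_K, HahnSeries.single_mul_single, mul_one, zero_add]

lemma emb_coeff_neg (g : Polynomial Fq) (k : ℕ) :
    (emb Fq g).coeff (-(k : ℤ)) = g.coeff k := by
  rw [emb_eq_sum Fq, sum_coeff Fq, Finset.sum_eq_single k]
  · rw [HahnSeries.coeff_single_same]
  · intro n _ hne
    exact HahnSeries.coeff_single_of_ne (by omega)
  · intro hk
    rw [HahnSeries.coeff_single_same]
    exact Polynomial.notMem_support_iff.mp hk

lemma suppLE_emb (g : Polynomial Fq) : SuppLE Fq (emb Fq g) := by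
  intro m hm
  rw [emb_eq_sum Fq, sum_coeff Fq]
  refine Finset.sum_eq_zero fun n _ => ?_
  rw [HahnSeries.coeff_single, if_neg]
  omega

lemma suppGE_emb (g : Polynomial Fq) : SuppGE Fq (-(g.natDegree : ℤ)) (emb Fq g) := by
  intro m hm
  rw [emb_eq_sum Fq, sum_coeff Fq]
  refine Finset.sum_eq_zero fun n hn => ?_
  have hd : n ≤ g.natDegree := Polynomial.le_natDegree_of_mem_supp n hn
  rw [HahnSeries.coeff_single, if_neg]
  omega

lemma emb_ne_zero {g : Polynomial Fq} (h : g ≠ 0) : emb Fq g ≠ 0 := by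
  intro hc
  have := emb_coeff_neg Fq g g.natDegree
  rw [hc, HahnSeries.coeff_zero] at this
  exact (Polynomial.leadingCoeff_ne_zero.mpr h) this.symm

lemma order_emb_ge (g : Polynomial Fq) : -(g.natDegree : ℤ) ≤ (emb Fq g).order := by
  rcases eq_or_ne (emb Fq g) 0 with h | h
  · rw [h, HahnSeries.order_zero]; omega
  · by_contra hc
    exact (HahnSeries.coeff_order_eq_zero.not.mpr h) (suppGE_emb Fq g _ (not_le.mp hc))

end EmbAux

section MaxFracAux

variable {n : ℕ}

lemma maxFrac_image_finite (ξ : K Fq) (R : Polynomial Fq) :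
    ((fun i => fracNorm Fq (emb Fq R * ξ ^ i)) '' Set.Icc 1 n).Finite :=
  (Set.finite_Icc 1 n).image _

lemma maxFrac_mem (hn : 1 ≤ n) (ξ : K Fq) (R : Polynomial Fq) :
    ∃ i ∈ Set.Icc 1 n, maxFrac Fq ξ n R = fracNorm Fq (emb Fq R * ξ ^ i) := by
  have hne : ((fun i => fracNorm Fq (emb Fq R * ξ ^ i)) '' Set.Icc 1 n).Nonempty :=
    ⟨_, ⟨1, Set.mem_Icc.mpr ⟨le_refl 1, hn⟩, rfl⟩⟩
  have := hne.csSup_mem (maxFrac_image_finite Fq ξ R)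
  obtain ⟨i, hi, hval⟩ := this
  exact ⟨i, hi, hval.symm⟩

lemma le_maxFrac (ξ : K Fq) (R : Polynomial Fq) {i : ℕ} (hi : i ∈ Set.Icc 1 n) :
    fracNorm Fq (emb Fq R * ξ ^ i) ≤ maxFrac Fq ξ n R :=
  le_csSup (maxFrac_image_finite Fq ξ R).bddAbove ⟨i, hi, rfl⟩

lemma maxFrac_nonneg (hn : 1 ≤ n) (ξ : K Fq) (R : Polynomial Fq) : 0 ≤ maxFrac Fq ξ n R := by
  obtain ⟨i, hi, h⟩ := maxFrac_mem Fq hn ξ R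
  rw [h]; exact fracNorm_nonneg Fq _

lemma maxFrac_lt_one (hn : 1 ≤ n) (ξ : K Fq) (R : Polynomial Fq) : maxFrac Fq ξ n R < 1 := by
  obtain ⟨i, hi, h⟩ := maxFrac_mem Fq hn ξ R
  rw [h]; exact fracNorm_lt_one Fq _

lemma maxFrac_eq_zero_iff (hn : 1 ≤ n) (ξ : K Fq) (R : Polynomial Fq) :
    maxFrac Fq ξ n R = 0 ↔ ∀ i ∈ Set.Icc 1 n, fracNorm Fq (emb Fq R * ξ ^ i) = 0 := by
  constructor
  · intro h i hi
    have h1 := le_maxFrac Fq ξ R hi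
    have h2 := fracNorm_nonneg Fq (emb Fq R * ξ ^ i)
    rw [h] at h1
    linarith
  · intro h
    obtain ⟨i, hi, hval⟩ := maxFrac_mem Fq hn ξ R
    rw [hval, h i hi]

lemma maxFrac_pos_of_ne (hn : 1 ≤ n) (ξ : K Fq) (R : Polynomial Fq)
    (h : ¬ ∀ i ∈ Set.Icc 1 n, fracNorm Fq (emb Fq R * ξ ^ i) = 0) :
    0 < maxFrac Fq ξ n R :=
  lt_of_le_of_ne (maxFrac_nonneg Fq hn ξ R)
    (fun hc => h ((maxFrac_eq_zero_iff Fq hn ξ R).mp hc.symm))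

end MaxFracAux

section PowAux

variable (p : ℕ) [Fact p.Prime] [CharP Fq p] {n : ℕ}

lemma maxFrac_pow_char (hn : 1 ≤ n) (ξ : K Fq) (R : Polynomial Fq) :
    maxFrac Fq (ξ ^ p) n (R ^ p) = maxFrac Fq ξ n R ^ p := by
  have key : ∀ i : ℕ, fracNorm Fq (emb Fq (R ^ p) * (ξ ^ p) ^ i)
      = fracNorm Fq (emb Fq R * ξ ^ i) ^ p := by
    intro i
    rw [map_pow, ← pow_mul, mul_comm p i, pow_mul, ← mul_pow]
    exact fracNorm_pow_char Fq p _
  obtain ⟨i0, hi0, hval⟩ := maxFrac_mem Fq hn ξ R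
  apply le_antisymm
  · refine csSup_le ⟨_, ⟨1, Set.mem_Icc.mpr ⟨le_refl 1, hn⟩, rfl⟩⟩ ?_
    rintro x ⟨i, hi, rfl⟩
    show fracNorm Fq (emb Fq (R ^ p) * (ξ ^ p) ^ i) ≤ _
    rw [key i]
    exact pow_le_pow_left₀ (fracNorm_nonneg Fq _) (le_maxFrac Fq ξ R hi) p
  · have : maxFrac Fq ξ n R ^ p = fracNorm Fq (emb Fq (R ^ p) * (ξ ^ p) ^ i0) := by
      rw [key i0, hval]
    rw [this]
    exact le_maxFrac Fq (ξ ^ p) (R ^ p) hi0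

end PowAux


section DecompAux

variable (p : ℕ) [Fact p.Prime] [CharP Fq p]

lemma frobenius_surj : Function.Surjective (fun b : Fq => b ^ p) := by
  have hinj : Function.Injective (fun b : Fq => b ^ p) := by
    intro x y hxy
    apply frobenius_inj Fq p
    rwa [frobenius_def, frobenius_def]
  exact Finite.injective_iff_surjective.mp hinj

def pRoot (a : Fq) : Fq := Classical.choose (frobenius_surj Fq p a)

lemma pRoot_pow (a : Fq) : pRoot Fq p a ^ p = a := Classical.choose_spec (frobenius_surj Fq p a)

lemma pRoot_zero : pRoot Fq p 0 = 0 := by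
  have := pRoot_pow Fq p 0
  exact (pow_eq_zero_iff ((Fact.out (p := p.Prime)).ne_zero)).mp this

def decomp (R : Polynomial Fq) (k : ℕ) : Polynomial Fq :=
  ∑ j ∈ Finset.range (R.natDegree + 1), C (pRoot Fq p (R.coeff (p * j + k))) * X ^ j

lemma decomp_coeff (R : Polynomial Fq) (k j : ℕ) :
    (decomp Fq p R k).coeff j
      = if j ≤ R.natDegree then pRoot Fq p (R.coeff (p * j + k)) else 0 := by
  rw [decomp, Polynomial.finset_sum_coeff]
  simp only [Polynomial.coeff_C_mul, Polynomial.coeff_X_pow, mul_ite, mul_one, mul_zero]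
  rw [Finset.sum_ite_eq (Finset.range (R.natDegree + 1)) j
    (fun i => pRoot Fq p (R.coeff (p * i + k)))]
  simp [Nat.lt_succ_iff]

lemma decomp_deg (R : Polynomial Fq) (k : ℕ) :
    p * (decomp Fq p R k).natDegree ≤ R.natDegree := by
  rcases eq_or_ne (decomp Fq p R k) 0 with h | h
  · rw [h, Polynomial.natDegree_zero, Nat.mul_zero]
    exact Nat.zero_le _
  · have hc : (decomp Fq p R k).coeff (decomp Fq p R k).natDegree ≠ 0 :=
      Polynomial.coeff_ne_zero_of_eq_degree (Polynomial.degree_eq_natDegree h)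
    rw [decomp_coeff] at hc
    by_cases hle : (decomp Fq p R k).natDegree ≤ R.natDegree
    · rw [if_pos hle] at hc
      have h1 : R.coeff (p * (decomp Fq p R k).natDegree + k) ≠ 0 := by
        intro h0
        rw [h0, pRoot_zero] at hc
        exact hc rfl
      have h2 := Polynomial.le_natDegree_of_ne_zero h1
      omega
    · rw [if_neg hle] at hc
      exact absurd rfl hc

lemma decomp_sum (R : Polynomial Fq) :
    ∑ k ∈ Finset.range p, X ^ k * decomp Fq p R k ^ p = R := by
  haveI := charP_poly Fq p
  have hfrob : ∀ k : ℕ, decomp Fq p R k ^ p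
      = ∑ j ∈ Finset.range (R.natDegree + 1), C (R.coeff (p * j + k)) * X ^ (p * j) := by
    intro k
    have h1 := map_sum (frobenius (Polynomial Fq) p)
      (fun j => C (pRoot Fq p (R.coeff (p * j + k))) * X ^ j) (Finset.range (R.natDegree + 1))
    simp only [frobenius_def] at h1
    rw [decomp, h1]
    refine Finset.sum_congr rfl fun j _ => ?_
    rw [mul_pow, ← Polynomial.C_pow, pRoot_pow, ← pow_mul, mul_comm j p]
  have h2 : ∑ k ∈ Finset.range p, X ^ k * decomp Fq p R k ^ p
      = ∑ kj ∈ Finset.range p ×ˢ Finset.range (R.natDegree + 1),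
          C (R.coeff (p * kj.2 + kj.1)) * X ^ (p * kj.2 + kj.1) := by
    rw [Finset.sum_product]
    refine Finset.sum_congr rfl fun k _ => ?_
    rw [hfrob k, Finset.mul_sum]
    refine Finset.sum_congr rfl fun j _ => ?_
    rw [pow_add]
    ring
  have hlt : R.natDegree < p * (R.natDegree + 1) := by
    have hp := (Fact.out (p := p.Prime)).pos
    calc R.natDegree < R.natDegree + 1 := Nat.lt_succ_self _
      _ = 1 * (R.natDegree + 1) := (one_mul _).symm
      _ ≤ p * (R.natDegree + 1) := Nat.mul_le_mul_right _ hp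
  have h3 : R = ∑ e ∈ Finset.range (p * (R.natDegree + 1)), C (R.coeff e) * X ^ e := by
    conv_lhs => rw [Polynomial.as_sum_range' R (p * (R.natDegree + 1)) hlt]
    exact Finset.sum_congr rfl fun e _ => (Polynomial.C_mul_X_pow_eq_monomial).symm
  rw [h2]
  conv_rhs => rw [h3]
  refine Finset.sum_nbij' (fun kj => p * kj.2 + kj.1) (fun e => (e % p, e / p))
    ?_ ?_ ?_ ?_ ?_
  · rintro ⟨k, j⟩ hkj
    rw [Finset.mem_product, Finset.mem_range, Finset.mem_range] at hkj
    rw [Finset.mem_range]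
    calc p * j + k < p * j + p := Nat.add_lt_add_left hkj.1 _
      _ = p * (j + 1) := by ring
      _ ≤ p * (R.natDegree + 1) := Nat.mul_le_mul_left _ (by omega)
  · intro e he
    rw [Finset.mem_range] at he
    rw [Finset.mem_product, Finset.mem_range, Finset.mem_range]
    constructor
    · exact Nat.mod_lt _ ((Fact.out (p := p.Prime)).pos)
    · rw [Nat.div_lt_iff_lt_mul ((Fact.out (p := p.Prime)).pos)]
      calc e < p * (R.natDegree + 1) := he
        _ = (R.natDegree + 1) * p := mul_comm _ _
  · rintro ⟨k, j⟩ hkj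
    rw [Finset.mem_product, Finset.mem_range, Finset.mem_range] at hkj
    have hmod : (p * j + k) % p = k := by
      rw [add_comm, Nat.add_mul_mod_self_left, Nat.mod_eq_of_lt hkj.1]
    have hdiv : (p * j + k) / p = j := by
      rw [add_comm, mul_comm, Nat.add_mul_div_right _ _ ((Fact.out (p := p.Prime)).pos),
        Nat.div_eq_of_lt hkj.1, zero_add]
    simp [hmod, hdiv]
  · intro e _
    simp only []
    exact Nat.div_add_mod e p
  · rintro ⟨k, j⟩ _
    rfl

lemma emb_X : emb Fq (X : Polynomial Fq) = Tvar Fq := by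
  simp [emb, Polynomial.eval₂_X]

lemma emb_decomp (R : Polynomial Fq) (ξ : K Fq) (i : ℕ) :
    emb Fq R * (ξ ^ p) ^ i
      = ∑ k ∈ Finset.range p, Tvar Fq ^ k * (emb Fq (decomp Fq p R k) * ξ ^ i) ^ p := by
  conv_lhs => rw [← decomp_sum Fq p R]
  rw [map_sum, Finset.sum_mul]
  refine Finset.sum_congr rfl fun k _ => ?_
  rw [map_mul, map_pow, map_pow, emb_X, mul_pow]
  have hx : (ξ ^ p) ^ i = (ξ ^ i) ^ p := by
    rw [← pow_mul, ← pow_mul, mul_comm]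
  rw [hx]
  ring

lemma fracPart_Tpow_mul_pow (j : ℕ) (hj : j < p) (η : K Fq) :
    fracPart Fq (Tvar Fq ^ j * η ^ p) = Tvar Fq ^ j * fracPart Fq η ^ p := by
  haveI := charP_K Fq p
  have hsplit : Tvar Fq ^ j * η ^ p
      = Tvar Fq ^ j * (η - fracPart Fq η) ^ p + Tvar Fq ^ j * fracPart Fq η ^ p := by
    rw [← mul_add, ← add_pow_char]
    ring_nf
  rw [hsplit, fracPart_add]
  have h1 : fracPart Fq (Tvar Fq ^ j * (η - fracPart Fq η) ^ p) = 0 := by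
    apply fracPart_eq_zero Fq
    apply suppLE_mul Fq
    · rw [Tvar_pow]
      exact suppLE_single Fq (by omega) 1
    · exact suppLE_pow Fq (suppLE_sub_fracPart Fq η) p
  have htv : SuppGE Fq (-(j : ℤ)) (Tvar Fq ^ j) := by
    rw [Tvar_pow]
    intro m hm
    rw [HahnSeries.coeff_single, if_neg]
    omega
  have h2 := suppGE_mul Fq htv (suppGE_pow Fq (suppGE_one_fracPart Fq η) p)
  rw [h1, zero_add, fracPart_eq_self Fq (suppGE_mono Fq (by omega) h2)]

lemma key_bound (η : ℕ → K Fq) {k : ℕ} (hk : k < p) :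
    fracNorm Fq (η k) ^ p ≤ fracNorm Fq (∑ j ∈ Finset.range p, Tvar Fq ^ j * η j ^ p) := by
  set f : ℕ → K Fq := fun j => fracPart Fq (η j) with hf
  set G : K Fq := ∑ j ∈ Finset.range p, Tvar Fq ^ j * f j ^ p with hG
  have hS : fracPart Fq (∑ j ∈ Finset.range p, Tvar Fq ^ j * η j ^ p) = G := by
    rw [fracPart_sum]
    exact Finset.sum_congr rfl fun j hj =>
      fracPart_Tpow_mul_pow Fq p j (Finset.mem_range.mp hj) _
  rcases eq_or_ne (f k) 0 with h0 | h0
  · rw [show fracNorm Fq (η k) = absK Fq (f k) from rfl, h0, absK_zero,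
      zero_pow ((Fact.out (p := p.Prime)).ne_zero)]
    exact fracNorm_nonneg Fq _
  · set J := (Finset.range p).filter (fun j => f j ≠ 0) with hJ
    have hkJ : k ∈ J := Finset.mem_filter.mpr ⟨Finset.mem_range.mpr hk, h0⟩
    obtain ⟨j0, hj0, hmin⟩ :=
      J.exists_min_image (fun j => (p : ℤ) * (f j).order - (j : ℤ)) ⟨k, hkJ⟩
    have horder : ∀ j ∈ J, (Tvar Fq ^ j * f j ^ p).order
        = (p : ℤ) * (f j).order - (j : ℤ) := by
      intro j hj
      have hfj : f j ≠ 0 := (Finset.mem_filter.mp hj).2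
      rw [Tvar_pow, HahnSeries.order_mul (HahnSeries.single_ne_zero one_ne_zero)
        (pow_ne_zero p hfj), HahnSeries.order_single one_ne_zero, order_pow Fq hfj]
      ring
    set D := (p : ℤ) * (f j0).order - (j0 : ℤ) with hD
    have hterm : ∀ j ∈ Finset.range p, j ≠ j0 → (Tvar Fq ^ j * f j ^ p).coeff D = 0 := by
      intro j hjr hne
      rcases eq_or_ne (f j) 0 with hz | hz
      · rw [hz, zero_pow ((Fact.out (p := p.Prime)).ne_zero), mul_zero, HahnSeries.coeff_zero]
      · have hjJ : j ∈ J := Finset.mem_filter.mpr ⟨hjr, hz⟩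
        apply HahnSeries.coeff_eq_zero_of_lt_order
        rw [horder j hjJ]
        refine lt_of_le_of_ne (hmin j hjJ) ?_
        intro hc
        have hj0r : (j0 : ℕ) < p := Finset.mem_range.mp (Finset.mem_filter.mp hj0).1
        have hjr' : (j : ℕ) < p := Finset.mem_range.mp hjr
        have hdvd : (p : ℤ) ∣ ((j0 : ℤ) - (j : ℤ)) :=
          ⟨(f j0).order - (f j).order, by rw [hD] at hc; linarith [mul_sub (p:ℤ) (f j0).order (f j).order]⟩
        have habs : |(j0 : ℤ) - (j : ℤ)| < (p : ℤ) := by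
          rw [abs_sub_lt_iff]
          constructor <;> [skip; skip] <;> push_cast <;> omega
        have := Int.eq_zero_of_abs_lt_dvd hdvd habs
        have : (j0 : ℤ) = (j : ℤ) := by omega
        exact hne (by exact_mod_cast this.symm)
    have hfj0 : f j0 ≠ 0 := (Finset.mem_filter.mp hj0).2
    have hj0ne : (Tvar Fq ^ j0 * f j0 ^ p).coeff D ≠ 0 := by
      have hDord : D = (Tvar Fq ^ j0 * f j0 ^ p).order := by
        rw [horder j0 hj0]
      rw [hDord]
      refine HahnSeries.coeff_order_eq_zero.not.mpr ?_
      rw [Tvar_pow]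
      exact mul_ne_zero (HahnSeries.single_ne_zero one_ne_zero) (pow_ne_zero p hfj0)
    have hSne : G.coeff D ≠ 0 := by
      rw [hG, sum_coeff Fq, Finset.sum_eq_single j0]
      · exact hj0ne
      · exact fun j hj hne => hterm j hj hne
      · intro hj0r
        exact absurd (Finset.mem_filter.mp hj0).1 hj0r
    have hGne : G ≠ 0 := by
      intro hc
      rw [hc, HahnSeries.coeff_zero] at hSne
      exact hSne rfl
    have hordG : G.order ≤ D := HahnSeries.order_le_of_coeff_ne_zero hSne
    have h1 : fracNorm Fq (∑ j ∈ Finset.range p, Tvar Fq ^ j * η j ^ p) = absK Fq G := by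
      rw [fracNorm, hS]
    rw [h1, absK_of_ne Fq hGne]
    have h2 : fracNorm Fq (η k) ^ p
        = (Fintype.card Fq : ℝ) ^ (-((p : ℤ) * (f k).order)) := by
      rw [show fracNorm Fq (η k) = absK Fq (f k) from rfl, absK_of_ne Fq h0,
        ← zpow_natCast ((Fintype.card Fq : ℝ) ^ (-(f k).order)) p, ← zpow_mul]
      congr 1
      ring
    rw [h2]
    apply zpow_le_zpow_right₀ (le_of_lt (one_lt_q Fq))
    have hDk := hmin k hkJ
    have hknn : (0 : ℤ) ≤ (k : ℤ) := Int.natCast_nonneg k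
    linarith

lemma finite_degree_le (D : ℕ) : {R : Polynomial Fq | R.natDegree ≤ D}.Finite := by
  have hsub : {R : Polynomial Fq | R.natDegree ≤ D}
      ⊆ (fun c : Fin (D + 1) → Fq => ∑ i : Fin (D + 1), C (c i) * X ^ (i : ℕ)) '' Set.univ := by
    intro R hR
    refine ⟨fun i => R.coeff i, Set.mem_univ _, ?_⟩
    show ∑ i : Fin (D + 1), C (R.coeff i) * X ^ (i : ℕ) = R
    rw [Fin.sum_univ_eq_sum_range (fun i => C (R.coeff i) * X ^ i)]
    conv_rhs => rw [Polynomial.as_sum_range' R (D + 1) (Nat.lt_succ_of_le hR)]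
    exact Finset.sum_congr rfl fun e _ => Polynomial.C_mul_X_pow_eq_monomial
  exact (Set.finite_univ.image _).subset hsub

end DecompAux


section MainAux

lemma fracPart_sub (a b : K Fq) :
    fracPart Fq (a - b) = fracPart Fq a - fracPart Fq b := by
  ext m
  rw [HahnSeries.coeff_sub, fracPart_coeff, fracPart_coeff, fracPart_coeff,
    HahnSeries.coeff_sub]
  split <;> simp

lemma order_nonpos_of_suppLE {y : K Fq} (h : SuppLE Fq y) (hy : y ≠ 0) : y.order ≤ 0 := by
  by_contra hc
  exact (HahnSeries.coeff_order_eq_zero.not.mpr hy) (h _ (not_le.mp hc))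

lemma one_le_qpow {x : ℝ} (hx : 0 ≤ x) : (1 : ℝ) ≤ (Fintype.card Fq : ℝ) ^ x := by
  rw [show (1 : ℝ) = (Fintype.card Fq : ℝ) ^ (0 : ℝ) from (Real.rpow_zero _).symm]
  exact (Real.rpow_le_rpow_left_iff (one_lt_q Fq)).mpr hx

end MainAux

section Main

variable (p : ℕ) [Fact p.Prime] [CharP Fq p] {n : ℕ}

lemma lamSet_subset_pow (hn : 1 ≤ n) (ξ : K Fq) :
    lamSet Fq ξ n ⊆ lamSet Fq (ξ ^ p) n := by
  intro l hl
  simp only [lamSet, Set.mem_setOf_eq] at hl ⊢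
  have hinj : Function.Injective (fun R : Polynomial Fq => R ^ p) := by
    haveI := charP_poly Fq p
    intro x y h
    apply frobenius_inj (Polynomial Fq) p
    rwa [frobenius_def, frobenius_def]
  refine Set.Infinite.mono ?_ (Set.Infinite.image (hinj.injOn) hl)
  rintro S ⟨R, hR, rfl⟩
  obtain ⟨hpos, hlt⟩ := hR
  simp only [Set.mem_setOf_eq]
  constructor
  · rw [maxFrac_pow_char Fq p hn ξ R]
    exact pow_pos hpos p
  · rw [maxFrac_pow_char Fq p hn ξ R, Polynomial.natDegree_pow]
    calc maxFrac Fq ξ n R ^ p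
        < ((Fintype.card Fq : ℝ) ^ (-(l * (R.natDegree : ℝ)))) ^ p :=
          pow_lt_pow_left₀ hlt (maxFrac_nonneg Fq hn ξ R) (Fact.out (p := p.Prime)).ne_zero
      _ = (Fintype.card Fq : ℝ) ^ (-(l * (((p * R.natDegree : ℕ)) : ℝ))) := by
          rw [← Real.rpow_natCast ((Fintype.card Fq : ℝ) ^ (-(l * (R.natDegree : ℝ)))) p,
            ← Real.rpow_mul (le_of_lt (q_pos Fq))]
          congr 1
          push_cast
          ring

lemma lamSet_pow_subset (hn : 1 ≤ n) (ξ : K Fq) :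
    lamSet Fq (ξ ^ p) n ⊆ lamSet Fq ξ n := by
  intro l hl
  simp only [lamSet, Set.mem_setOf_eq] at hl ⊢
  have hone_mem : (1 : ℕ) ∈ Set.Icc 1 n := Set.mem_Icc.mpr ⟨le_refl 1, hn⟩
  -- Step 0: the fractional part of ξ is nonzero
  have hξ : fracPart Fq ξ ≠ 0 := by
    intro hfr
    obtain ⟨R, hR⟩ := hl.nonempty
    have hz : maxFrac Fq (ξ ^ p) n R = 0 := by
      rw [maxFrac_eq_zero_iff Fq hn]
      intro i hi
      rw [fracNorm_eq_zero_iff Fq]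
      apply fracPart_eq_zero Fq
      exact suppLE_mul Fq (suppLE_emb Fq R)
        (suppLE_pow Fq (suppLE_pow Fq (suppLE_of_fracPart_eq_zero Fq hfr) p) i)
    obtain ⟨h1, _⟩ := hR
    rw [hz] at h1
    exact lt_irrefl 0 h1
  rcases le_or_gt l 0 with hl0 | hl0
  · -- case l ≤ 0 : all polynomials with positive maxFrac satisfy the bound
    have hsubZ : ∀ Q1 Q2 : Polynomial Fq, maxFrac Fq ξ n Q1 = 0 → maxFrac Fq ξ n Q2 = 0 →
        maxFrac Fq ξ n (Q1 - Q2) = 0 := by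
      intro Q1 Q2 h1 h2
      rw [maxFrac_eq_zero_iff Fq hn]
      intro i hi
      have e1 := (maxFrac_eq_zero_iff Fq hn ξ Q1).mp h1 i hi
      have e2 := (maxFrac_eq_zero_iff Fq hn ξ Q2).mp h2 i hi
      rw [fracNorm_eq_zero_iff Fq] at e1 e2 ⊢
      have hx : emb Fq (Q1 - Q2) * ξ ^ i = emb Fq Q1 * ξ ^ i - emb Fq Q2 * ξ ^ i := by
        rw [map_sub]; ring
      rw [hx, fracPart_sub, e1, e2, sub_zero]
    have hone : maxFrac Fq ξ n 1 ≠ 0 := by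
      intro h1
      have := (maxFrac_eq_zero_iff Fq hn ξ 1).mp h1 1 hone_mem
      rw [map_one, one_mul, pow_one, fracNorm_eq_zero_iff Fq] at this
      exact hξ this
    have hWsub : {Q : Polynomial Fq | maxFrac Fq ξ n Q ≠ 0} ⊆
        {R : Polynomial Fq | 0 < maxFrac Fq ξ n R ∧
          maxFrac Fq ξ n R < (Fintype.card Fq : ℝ) ^ (-(l * (R.natDegree : ℝ)))} := by
      intro Q hQ
      have hpos : 0 < maxFrac Fq ξ n Q :=
        lt_of_le_of_ne (maxFrac_nonneg Fq hn ξ Q) (Ne.symm hQ)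
      refine ⟨hpos, lt_of_lt_of_le (maxFrac_lt_one Fq hn ξ Q) (one_le_qpow Fq ?_)⟩
      have hd : (0 : ℝ) ≤ (Q.natDegree : ℝ) := Nat.cast_nonneg _
      nlinarith
    refine Set.Infinite.mono hWsub ?_
    by_cases hZfin : {Q : Polynomial Fq | maxFrac Fq ξ n Q = 0}.Finite
    · have hcompl := hZfin.infinite_compl
      have : {Q : Polynomial Fq | maxFrac Fq ξ n Q = 0}ᶜ
          = {Q : Polynomial Fq | maxFrac Fq ξ n Q ≠ 0} := by
        ext Q; simp
      rwa [this] at hcompl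
    · have hZinf : {Q : Polynomial Fq | maxFrac Fq ξ n Q = 0}.Infinite := hZfin
      have himg : (fun Q => 1 + Q) '' {Q : Polynomial Fq | maxFrac Fq ξ n Q = 0}
          ⊆ {Q : Polynomial Fq | maxFrac Fq ξ n Q ≠ 0} := by
        rintro _ ⟨Q, hQ, rfl⟩ hcontra
        have := hsubZ (1 + Q) Q hcontra hQ
        rw [add_sub_cancel_right] at this
        exact hone this
      exact Set.Infinite.mono himg (Set.Infinite.image ((add_right_injective 1).injOn) hZinf)
  · -- case 0 < l
    by_cases hB : ∃ B : Polynomial Fq, B ≠ 0 ∧ maxFrac Fq ξ n B = 0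
    · -- degenerate (rational) case : contradiction with infinitude
      exfalso
      obtain ⟨B, hBne, hBz⟩ := hB
      have hBξ : SuppLE Fq (emb Fq B * ξ) := by
        have := (maxFrac_eq_zero_iff Fq hn ξ B).mp hBz 1 hone_mem
        rw [pow_one, fracNorm_eq_zero_iff Fq] at this
        exact suppLE_of_fracPart_eq_zero Fq this
      set N : ℤ := (p * n : ℕ) * (B.natDegree : ℤ) with hN
      -- every R with positive maxFrac for ξ^p has maxFrac ≥ q^(-N)
      have hlow : ∀ R : Polynomial Fq, 0 < maxFrac Fq (ξ ^ p) n R →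
          (Fintype.card Fq : ℝ) ^ (-N) ≤ maxFrac Fq (ξ ^ p) n R := by
        intro R hpos
        obtain ⟨i, hi, hval⟩ := maxFrac_mem Fq hn (ξ ^ p) R
        set η := emb Fq R * (ξ ^ p) ^ i with hη
        have hfne : fracPart Fq η ≠ 0 := by
          intro hc
          rw [hval, fracNorm, hc, absK_zero] at hpos
          exact lt_irrefl 0 hpos
        have hin : i ≤ n := (Set.mem_Icc.mp hi).2
        have hsplitn : p * n = p * i + p * (n - i) := by
          rw [← Nat.mul_add, Nat.add_sub_cancel' hin]
        have hkey : emb Fq B ^ (p * n) * η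
            = emb Fq (R * B ^ (p * (n - i))) * (emb Fq B * ξ) ^ (p * i) := by
          rw [hη]
          have h1 : (ξ ^ p) ^ i = ξ ^ (p * i) := by rw [← pow_mul]
          have h3 : emb Fq B ^ (p * n) = emb Fq B ^ (p * i) * emb Fq B ^ (p * (n - i)) := by
            rw [← pow_add, ← hsplitn]
          rw [h1, mul_pow, h3, map_mul, map_pow]
          ring
        have hsle : SuppLE Fq (emb Fq B ^ (p * n) * η) := by
          rw [hkey]
          exact suppLE_mul Fq (suppLE_emb Fq _) (suppLE_pow Fq hBξ _)
        have hsle2 : SuppLE Fq (emb Fq B ^ (p * n) * (η - fracPart Fq η)) :=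
          suppLE_mul Fq (suppLE_pow Fq (suppLE_emb Fq B) _) (suppLE_sub_fracPart Fq η)
        have hsle3 : SuppLE Fq (emb Fq B ^ (p * n) * fracPart Fq η) := by
          have hx : emb Fq B ^ (p * n) * fracPart Fq η
              = emb Fq B ^ (p * n) * η - emb Fq B ^ (p * n) * (η - fracPart Fq η) := by
            ring
          rw [hx]
          exact suppLE_sub Fq hsle hsle2
        have hBpow : emb Fq B ^ (p * n) ≠ 0 := pow_ne_zero _ (emb_ne_zero Fq hBne)
        have hprodne : emb Fq B ^ (p * n) * fracPart Fq η ≠ 0 :=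
          mul_ne_zero hBpow hfne
        have hord := order_nonpos_of_suppLE Fq hsle3 hprodne
        rw [HahnSeries.order_mul hBpow hfne] at hord
        have hordB : -(((p * n : ℕ) : ℤ) * (B.natDegree : ℤ)) ≤ (emb Fq B ^ (p * n)).order := by
          rw [order_pow Fq (emb_ne_zero Fq hBne)]
          have h1 := order_emb_ge Fq B
          have h2 : (0 : ℤ) ≤ ((p * n : ℕ) : ℤ) := Int.natCast_nonneg _
          nlinarith
        have hmle : (fracPart Fq η).order ≤ N := by
          rw [hN]; omega
        rw [hval, fracNorm, absK_of_ne Fq hfne]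
        exact zpow_le_zpow_right₀ (le_of_lt (one_lt_q Fq)) (by omega)
      -- hence all R in the infinite set have bounded degree
      set D0 : ℕ := Nat.ceil ((N : ℝ) / l) with hD0
      have hsub : {R : Polynomial Fq | 0 < maxFrac Fq (ξ ^ p) n R ∧
            maxFrac Fq (ξ ^ p) n R < (Fintype.card Fq : ℝ) ^ (-(l * (R.natDegree : ℝ)))}
          ⊆ {R : Polynomial Fq | R.natDegree ≤ D0} := by
        intro R hR
        obtain ⟨hpos, hlt⟩ := hR
        have h1 := lt_of_le_of_lt (hlow R hpos) hlt
        rw [← Real.rpow_intCast (Fintype.card Fq : ℝ) (-N)] at h1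
        have h2 := (Real.rpow_lt_rpow_left_iff (one_lt_q Fq)).mp h1
        push_cast at h2
        -- h2 : -(N:ℝ) < -(l * deg R)
        have h3 : l * (R.natDegree : ℝ) < (N : ℝ) := by linarith
        have h4 : (R.natDegree : ℝ) ≤ (N : ℝ) / l := by
          rw [le_div_iff₀ hl0]
          nlinarith
        have h5 : (R.natDegree : ℝ) ≤ (D0 : ℝ) := le_trans h4 (Nat.le_ceil _)
        exact_mod_cast h5
      exact hl (Set.Finite.subset (finite_degree_le Fq D0) hsub)
    · -- main case : decompose each R
      push_neg at hB
      by_contra hGinf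
      have hGfin : {R : Polynomial Fq | 0 < maxFrac Fq ξ n R ∧
          maxFrac Fq ξ n R < (Fintype.card Fq : ℝ) ^ (-(l * (R.natDegree : ℝ)))}.Finite :=
        Set.not_infinite.mp hGinf
      set G := {R : Polynomial Fq | 0 < maxFrac Fq ξ n R ∧
          maxFrac Fq ξ n R < (Fintype.card Fq : ℝ) ^ (-(l * (R.natDegree : ℝ)))} with hG
      have hsub : {R : Polynomial Fq | 0 < maxFrac Fq (ξ ^ p) n R ∧
            maxFrac Fq (ξ ^ p) n R < (Fintype.card Fq : ℝ) ^ (-(l * (R.natDegree : ℝ)))}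
          ⊆ (fun c : Fin p → Polynomial Fq =>
              ∑ k : Fin p, X ^ (k : ℕ) * c k ^ p) '' (Set.univ.pi fun _ => insert 0 G) := by
        intro R hR
        obtain ⟨hpos, hlt⟩ := hR
        refine ⟨fun k : Fin p => decomp Fq p R (k : ℕ), ?_, ?_⟩
        · rw [Set.mem_univ_pi]
          intro k
          rcases eq_or_ne (decomp Fq p R (k : ℕ)) 0 with hzz | hzz
          · rw [hzz]; exact Set.mem_insert 0 G
          · refine Set.mem_insert_of_mem 0 ?_
            rw [hG]
            have hposQ : 0 < maxFrac Fq ξ n (decomp Fq p R (k : ℕ)) :=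
              lt_of_le_of_ne (maxFrac_nonneg Fq hn ξ _) (Ne.symm (hB _ hzz))
            refine ⟨hposQ, ?_⟩
            obtain ⟨i1, hi1, hval1⟩ := maxFrac_mem Fq hn ξ (decomp Fq p R (k : ℕ))
            have hkey := key_bound Fq p (fun j => emb Fq (decomp Fq p R j) * ξ ^ i1) k.2
            rw [← emb_decomp Fq p R ξ i1] at hkey
            have h5 : fracNorm Fq (emb Fq R * (ξ ^ p) ^ i1) ≤ maxFrac Fq (ξ ^ p) n R :=
              le_maxFrac Fq (ξ ^ p) R hi1
            set b : ℝ := (Fintype.card Fq : ℝ) ^ (-(l * (R.natDegree : ℝ)) / p) with hb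
            have hpne : ((p : ℝ)) ≠ 0 := Nat.cast_ne_zero.mpr (Fact.out (p := p.Prime)).ne_zero
            have hbp : b ^ p = (Fintype.card Fq : ℝ) ^ (-(l * (R.natDegree : ℝ))) := by
              rw [hb, ← Real.rpow_natCast b p, ← Real.rpow_mul (le_of_lt (q_pos Fq)),
                div_mul_cancel₀ _ hpne]
            have hflt : fracNorm Fq (emb Fq (decomp Fq p R (k : ℕ)) * ξ ^ i1) < b := by
              by_contra hge
              push_neg at hge
              have h7 := pow_le_pow_left₀ (Real.rpow_nonneg (le_of_lt (q_pos Fq)) _) hge p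
              rw [hbp] at h7
              have h8 := lt_of_le_of_lt (le_trans hkey h5) hlt
              linarith
            have hble : b ≤ (Fintype.card Fq : ℝ)
                ^ (-(l * (((decomp Fq p R (k : ℕ)).natDegree : ℝ)))) := by
              rw [hb]
              apply (Real.rpow_le_rpow_left_iff (one_lt_q Fq)).mpr
              have hdeg := decomp_deg Fq p R (k : ℕ)
              have hdegR : (p : ℝ) * ((decomp Fq p R (k : ℕ)).natDegree : ℝ)
                  ≤ (R.natDegree : ℝ) := by exact_mod_cast hdeg
              have hppos : (0 : ℝ) < (p : ℝ) :=
                Nat.cast_pos.mpr (Fact.out (p := p.Prime)).pos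
              rw [div_le_iff₀ hppos]
              nlinarith [mul_le_mul_of_nonneg_left hdegR (le_of_lt hl0)]
            rw [hval1]
            exact lt_of_lt_of_le hflt hble
        · show ∑ k : Fin p, X ^ (k : ℕ) * decomp Fq p R (k : ℕ) ^ p = R
          rw [Fin.sum_univ_eq_sum_range (fun k => X ^ k * decomp Fq p R k ^ p)]
          exact decomp_sum Fq p R
      have hfin : ((fun c : Fin p → Polynomial Fq =>
          ∑ k : Fin p, X ^ (k : ℕ) * c k ^ p) '' (Set.univ.pi fun _ => insert 0 G)).Finite :=
        Set.Finite.image _ (Set.Finite.pi fun _ => hGfin.insert 0)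
      exact hl (hfin.subset hsub)

end Main

/-- `λ_n(ξ) = λ_n(ξ^p)`. -/
theorem lam_frobenius (p : ℕ) [Fact p.Prime] (Fq : Type) [Field Fq] [Fintype Fq] [CharP Fq p]
    (ξ : K Fq) (n : ℕ) (hn : 1 ≤ n) :
    lam Fq ξ n = lam Fq (ξ ^ p) n := by
  have hset : lamSet Fq ξ n = lamSet Fq (ξ ^ p) n :=
    Set.Subset.antisymm (lamSet_subset_pow Fq p hn ξ) (lamSet_pow_subset Fq p hn ξ)
  unfold lam
  rw [hset]

end
end MahlerKoksmaFq
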